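/- Let f: X → ℝ be L-smooth and convex, ψ σ-strongly convex, φ(·) = D_ψ(·, x^(0)). Let the Nesterov accelerated iteration be z^(i) = z^(i−1) − a_i∇f(x^(i)), x^(i) = (A^(i−1)/A^(i)) x̂^(i−1) + (a_i/A^(i)) ∇φ*(z^(i−1)), x̂^(i) = Grad(x^(i)) := argmin_{x∈X}{⟨∇f(x^(i)), x − x^(i)⟩ + (L/2)‖x − x^(i)‖²}, with a_i = (σ/L)(i+1)/2. Then for all k ≥ 1, f(x̂^(k)) − f(x*) ≤ (4L/σ) · D_ψ(x*, x^(0)) / ((k+1)(k+2)). -/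

import Mathlib

open scoped RealInnerProductSpace

set_option maxHeartbeats 1000000

/-- A σ-strongly convex function on a convex set, at a constrained minimizer `v`,
satisfies `g v + σ/2 ‖x - v‖² ≤ g x`. -/
lemma strongmin_aux {E : Type*} [NormedAddCommGroup E] [InnerProductSpace ℝ E]
    {X : Set E} (hX : Convex ℝ X) {g : E → ℝ} {G : E → E} {σ : ℝ} (hσ : 0 < σ)
    (hsc : ∀ p ∈ X, ∀ q ∈ X, g p + ⟪G p, q - p⟫ + σ / 2 * ‖q - p‖ ^ 2 ≤ g q)
    {v : E} (hv : v ∈ X) (hmin : ∀ y ∈ X, g v ≤ g y) :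
    ∀ y ∈ X, g v + σ / 2 * ‖y - v‖ ^ 2 ≤ g y := by
  intro y hy
  set C := ‖y - v‖ ^ 2 with hC
  have hC0 : 0 ≤ C := by positivity
  clear_value C
  have key : ∀ t : ℝ, 0 < t → t < 1 → g v + σ * (1 - t) / 2 * C ≤ g y := by
    intro t ht0 ht1
    set xt := (1 - t) • v + t • y with hxt
    have hxtX : xt ∈ X := hX hv hy (by linarith) (le_of_lt ht0) (by ring)
    have h1 := hsc xt hxtX v hv
    have h2 := hsc xt hxtX y hy
    have hv_xt : v - xt = (-t) • (y - v) := by rw [hxt]; module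
    have hx_xt : y - xt = (1 - t) • (y - v) := by rw [hxt]; module
    have hnv : ‖v - xt‖ ^ 2 = t ^ 2 * C := by
      rw [hv_xt, norm_smul, hC]
      rw [Real.norm_eq_abs, abs_neg, abs_of_pos ht0]
      ring
    have hnx : ‖y - xt‖ ^ 2 = (1 - t) ^ 2 * C := by
      rw [hx_xt, norm_smul, hC]
      rw [Real.norm_eq_abs, abs_of_pos (by linarith : (0:ℝ) < 1 - t)]
      ring
    have hi1 : ⟪G xt, v - xt⟫ = (-t) * ⟪G xt, y - v⟫ := by
      rw [hv_xt, real_inner_smul_right]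
    have hi2 : ⟪G xt, y - xt⟫ = (1 - t) * ⟪G xt, y - v⟫ := by
      rw [hx_xt, real_inner_smul_right]
    rw [hi1, hnv] at h1
    rw [hi2, hnx] at h2
    have hxtmin : g v ≤ g xt := hmin xt hxtX
    set I := ⟪G xt, y - v⟫ with hI
    -- from h1 and hxtmin : -t*I + σ/2*t^2*C ≤ 0, so σ*t*C/2 ≤ I
    have hIb : t * (σ * t * C / 2) ≤ t * I := by nlinarith
    have hIb' : σ * t * C / 2 ≤ I := (mul_le_mul_iff_right₀ ht0).mp hIb
    have h1t : (1 - t) * (σ * t * C / 2) ≤ (1 - t) * I :=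
      mul_le_mul_of_nonneg_left hIb' (by linarith)
    nlinarith
  rcases eq_or_lt_of_le hC0 with h0 | hpos
  · rw [← h0]; simpa using hmin y hy
  · by_contra hcon
    push_neg at hcon
    have hε0 : 0 < g v + σ / 2 * C - g y := by linarith
    obtain ⟨t, ht0, ht1, h2⟩ :
        ∃ t : ℝ, 0 < t ∧ t < 1 ∧ t * (σ * C) ≤ g v + σ / 2 * C - g y := by
      refine ⟨min (1/2 : ℝ) ((g v + σ / 2 * C - g y) / (σ * C)),
        lt_min (by norm_num) (div_pos hε0 (by positivity)),
        lt_of_le_of_lt (min_le_left _ _) (by norm_num), ?_⟩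
      have htle := min_le_right (1/2 : ℝ) ((g v + σ / 2 * C - g y) / (σ * C))
      exact (le_div_iff₀ (by positivity)).mp htle
    have h := key t ht0 ht1
    nlinarith

/-- Convergence of Nesterov's accelerated method for `L`-smooth convex minimization
(Theorem `thm:amd-conv`): with `a_i = (σ/L)(i+1)/2`,
`f(x̂^(k)) − f(x*) ≤ (4L/σ) D_ψ(x*, x^(0)) / ((k+1)(k+2))`. -/
theorem stmt10 {n : ℕ} (X : Set (EuclideanSpace ℝ (Fin n)))
    (hXcl : IsClosed X) (hXcvx : Convex ℝ X)
    (f : EuclideanSpace ℝ (Fin n) → ℝ)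
    (gf : EuclideanSpace ℝ (Fin n) → EuclideanSpace ℝ (Fin n))
    (L : ℝ) (hL : 0 < L)
    (hsmooth : ∀ p ∈ X, ∀ q ∈ X,
      f q ≤ f p + ⟪gf p, q - p⟫ + L / 2 * ‖q - p‖ ^ 2)
    (hconv : ∀ p ∈ X, ∀ q ∈ X, f q ≥ f p + ⟪gf p, q - p⟫)
    (ψ : EuclideanSpace ℝ (Fin n) → ℝ)
    (gψ : EuclideanSpace ℝ (Fin n) → EuclideanSpace ℝ (Fin n))
    (σ : ℝ) (hσ : 0 < σ)
    (hstrong : ∀ p ∈ X, ∀ q ∈ X,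
      ψ q ≥ ψ p + ⟪gψ p, q - p⟫ + σ / 2 * ‖q - p‖ ^ 2)
    (xstar : EuclideanSpace ℝ (Fin n)) (hxstarX : xstar ∈ X)
    (hxstarmin : ∀ y ∈ X, f xstar ≤ f y)
    (z x xh : ℕ → EuclideanSpace ℝ (Fin n))
    (hx0X : x 0 ∈ X)
    (φ : EuclideanSpace ℝ (Fin n) → ℝ)
    (hφ : ∀ p, φ p = ψ p - ψ (x 0) - ⟪gψ (x 0), p - x 0⟫)
    (m : EuclideanSpace ℝ (Fin n) → EuclideanSpace ℝ (Fin n))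
    (hmX : ∀ w, m w ∈ X)
    (hmmax : ∀ w, IsMaxOn (fun p => ⟪w, p⟫ - φ p) X (m w))
    (grad : EuclideanSpace ℝ (Fin n) → EuclideanSpace ℝ (Fin n))
    (hgradX : ∀ p, grad p ∈ X)
    (hgradmin : ∀ p, IsMinOn
      (fun u => ⟪gf p, u - p⟫ + L / 2 * ‖u - p‖ ^ 2) X (grad p))
    (a A : ℕ → ℝ)
    (hA : ∀ i, A i = ∑ j ∈ Finset.range (i + 1), a j)
    (ha : ∀ i : ℕ, a i = σ / L * (i + 1) / 2)
    (hz0 : z 0 = -(a 0) • gf (x 0)) (hxh0 : xh 0 = grad (x 0))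
    (hz : ∀ i, z (i + 1) = z i - a (i + 1) • gf (x (i + 1)))
    (hx : ∀ i, x (i + 1) =
      (A i / A (i + 1)) • xh i + (a (i + 1) / A (i + 1)) • m (z i))
    (hxh : ∀ i, xh (i + 1) = grad (x (i + 1)))
    (k : ℕ) (hk : 1 ≤ k) :
    f (xh k) - f xstar ≤
      4 * L / σ * ((ψ xstar - ψ (x 0) - ⟪gψ (x 0), xstar - x 0⟫) /
        ((k + 1) * (k + 2))) := by

  have hL0 : L ≠ 0 := ne_of_gt hL
  have hapos : ∀ i : ℕ, 0 < a i := by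
    intro i; rw [ha i]; positivity
  have hAc : ∀ i : ℕ, A i = σ * (i + 1) * (i + 2) / (4 * L) := by
    intro i
    induction i with
    | zero =>
        rw [hA, Finset.sum_range_one, ha]
        push_cast
        field_simp
        ring
    | succ i ih =>
        have hs : A (i + 1) = A i + a (i + 1) := by
          rw [hA, hA, Finset.sum_range_succ]
        rw [hs, ih, ha]
        push_cast
        field_simp
        ring
  have hApos : ∀ i, 0 < A i := by
    intro i; rw [hAc]; positivity
  have hAsucc : ∀ i, A (i + 1) = A i + a (i + 1) := by
    intro i; rw [hA, hA, Finset.sum_range_succ]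
  have hxhX : ∀ i, xh i ∈ X := by
    intro i
    cases i with
    | zero => rw [hxh0]; exact hgradX _
    | succ i => rw [hxh]; exact hgradX _
  have hxX : ∀ i, x i ∈ X := by
    intro i
    cases i with
    | zero => exact hx0X
    | succ i =>
        rw [hx]
        have h1 : (0:ℝ) ≤ A i / A (i + 1) := le_of_lt (div_pos (hApos i) (hApos (i + 1)))
        have h2 : (0:ℝ) ≤ a (i + 1) / A (i + 1) := le_of_lt (div_pos (hapos _) (hApos _))
        have h3 : A i / A (i + 1) + a (i + 1) / A (i + 1) = 1 := by
          rw [← add_div, ← hAsucc]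
          exact div_self (ne_of_gt (hApos _))
        exact hXcvx (hxhX i) (hmX (z i)) h1 h2 h3
  -- strong convexity of φ
  have hφsc : ∀ p ∈ X, ∀ q ∈ X,
      φ p + ⟪gψ p - gψ (x 0), q - p⟫ + σ / 2 * ‖q - p‖ ^ 2 ≤ φ q := by
    intro p hp q hq
    have h1 := hstrong p hp q hq
    have h2 : ⟪gψ (x 0), q - x 0⟫ - ⟪gψ (x 0), p - x 0⟫ = ⟪gψ (x 0), q - p⟫ := by
      rw [← inner_sub_right]
      congr 1
      abel
    rw [hφ p, hφ q, inner_sub_left]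
    linarith
  -- formula for z
  have hzsum : ∀ i, z i = -(∑ j ∈ Finset.range (i + 1), a j • gf (x j)) := by
    intro i
    induction i with
    | zero => rw [hz0, Finset.sum_range_one]; module
    | succ i ih => rw [hz, ih, Finset.sum_range_succ _ (i + 1)]; module
  -- the lower-bound linear function
  set Lf : ℕ → EuclideanSpace ℝ (Fin n) → ℝ :=
    fun i y => ∑ j ∈ Finset.range (i + 1), a j * (f (x j) + ⟪gf (x j), y - x j⟫) with hLfdef
  have hLdiff : ∀ i p q, Lf i p - Lf i q = ⟪-(z i), p - q⟫ := by
    intro i p q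
    rw [hzsum i, neg_neg, sum_inner, ← Finset.sum_sub_distrib]
    refine Finset.sum_congr rfl fun j _ => ?_
    rw [real_inner_smul_left, inner_sub_right, inner_sub_right, inner_sub_right]
    ring
  -- strong minimality of m (z i) for the regularized model
  have hmstrong : ∀ i, ∀ y ∈ X,
      (Lf i (m (z i)) + φ (m (z i))) + σ / 2 * ‖y - m (z i)‖ ^ 2 ≤ Lf i y + φ y := by
    intro i
    have hgmin : ∀ y ∈ X, φ (m (z i)) - ⟪z i, m (z i)⟫ ≤ φ y - ⟪z i, y⟫ := by
      intro y hy
      have h := isMaxOn_iff.mp (hmmax (z i)) y hy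
      linarith
    have hsm := strongmin_aux hXcvx hσ (g := fun p => φ p - ⟪z i, p⟫)
      (G := fun p => gψ p - gψ (x 0) - z i) ?_ (hmX (z i)) hgmin
    · intro y hy
      have h1 := hsm y hy
      have h2 := hLdiff i y (m (z i))
      have h3 : ⟪-(z i), y - m (z i)⟫ = ⟪z i, m (z i)⟫ - ⟪z i, y⟫ := by
        rw [inner_neg_left, inner_sub_right]; ring
      linarith
    · intro p hp q hq
      have h := hφsc p hp q hq
      have h2 : ⟪gψ p - gψ (x 0) - z i, q - p⟫
          = ⟪gψ p - gψ (x 0), q - p⟫ - ⟪z i, q - p⟫ := by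
        rw [sub_sub, inner_sub_left, inner_sub_left, inner_add_left]
        ring
      have h3 : ⟪z i, q⟫ - ⟪z i, p⟫ = ⟪z i, q - p⟫ := (inner_sub_right _ _ _).symm
      linarith
  -- key step-size inequality
  have hkey : ∀ i : ℕ, L * (a (i + 1)) ^ 2 ≤ σ * A (i + 1) := by
    intro i
    have hi : (0:ℝ) ≤ (i:ℝ) := Nat.cast_nonneg i
    rw [ha, hAc]
    push_cast
    have e1 : L * (σ / L * ((i:ℝ) + 1 + 1) / 2) ^ 2
        = σ ^ 2 * (((i:ℝ) + 1 + 1) * ((i:ℝ) + 1 + 1)) / (4 * L) := by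
      field_simp; ring
    have e2 : σ * (σ * ((i:ℝ) + 1 + 1) * ((i:ℝ) + 1 + 2) / (4 * L))
        = σ ^ 2 * (((i:ℝ) + 1 + 1) * ((i:ℝ) + 1 + 2)) / (4 * L) := by
      field_simp
    rw [e1, e2]
    gcongr
    linarith
  -- main invariant
  have main : ∀ i, ∀ y ∈ X, A i * f (xh i) ≤ Lf i y + φ y := by
    intro i
    induction i with
    | zero =>
        intro y hy
        have hLf0 : Lf 0 y = a 0 * (f (x 0) + ⟪gf (x 0), y - x 0⟫) := by
          simp only [hLfdef]
          rw [Finset.sum_range_one]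
        have hA0 : A 0 = a 0 := by rw [hA, Finset.sum_range_one]
        have ha0L : a 0 * L = σ / 2 := by
          rw [ha]; push_cast; field_simp; ring
        have ha0LN : a 0 * L * ‖y - x 0‖ ^ 2 = σ / 2 * ‖y - x 0‖ ^ 2 := by
          rw [ha0L]
        have hφy : σ / 2 * ‖y - x 0‖ ^ 2 ≤ φ y := by
          have h := hstrong (x 0) hx0X y hy
          rw [hφ y]
          have : ⟪gψ (x 0), y - x 0⟫ ≤ ⟪gψ (x 0), y - x 0⟫ := le_refl _
          linarith
        have e1 : ⟪gf (x 0), xh 0 - x 0⟫ + L / 2 * ‖xh 0 - x 0‖ ^ 2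
            ≤ ⟪gf (x 0), y - x 0⟫ + L / 2 * ‖y - x 0‖ ^ 2 := by
          have h := isMinOn_iff.mp (hgradmin (x 0)) y hy
          rw [hxh0]; simpa using h
        have e2 := hsmooth (x 0) hx0X (xh 0) (hxhX 0)
        have ha0 := hapos 0
        have ea1 := mul_le_mul_of_nonneg_left e1 (le_of_lt ha0)
        have ea2 := mul_le_mul_of_nonneg_left e2 (le_of_lt ha0)
        have hn0 : (0:ℝ) ≤ ‖y - x 0‖ ^ 2 := by positivity
        rw [hLf0, hA0]
        nlinarith [ea1, ea2, hφy, ha0LN, hn0, ha0]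
    | succ i ih =>
        intro y hy
        have hsplit : Lf (i + 1) y
            = Lf i y + a (i + 1) * (f (x (i + 1)) + ⟪gf (x (i + 1)), y - x (i + 1)⟫) :=
          Finset.sum_range_succ _ (i + 1)
        have h1 := hmstrong i y hy
        have h2 := ih (m (z i)) (hmX (z i))
        have h3 := hconv (x (i + 1)) (hxX (i + 1)) (xh i) (hxhX i)
        have hA'ne : A (i + 1) ≠ 0 := ne_of_gt (hApos (i + 1))
        have c1 : A (i + 1) * (A i / A (i + 1)) = A i := by field_simp
        have c2 : A (i + 1) * (a (i + 1) / A (i + 1)) = a (i + 1) := by field_simp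
        have hvec : A (i + 1) • x (i + 1) = A i • xh i + a (i + 1) • m (z i) := by
          rw [hx i, smul_add, smul_smul, smul_smul, c1, c2]
        have hid : A i • (xh i - x (i + 1)) + a (i + 1) • (y - x (i + 1))
            = a (i + 1) • (y - m (z i)) := by
          have expand : A i • (xh i - x (i + 1)) + a (i + 1) • (y - x (i + 1))
              = (A i • xh i + a (i + 1) • m (z i)) - A (i + 1) • x (i + 1)
                + a (i + 1) • (y - m (z i)) := by
            rw [hAsucc i]; module
          rw [expand, ← hvec, sub_self, zero_add]
        have hC : A i * ⟪gf (x (i + 1)), xh i - x (i + 1)⟫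
              + a (i + 1) * ⟪gf (x (i + 1)), y - x (i + 1)⟫
            = a (i + 1) * ⟪gf (x (i + 1)), y - m (z i)⟫ := by
          rw [← real_inner_smul_right, ← real_inner_smul_right, ← inner_add_right,
            hid, real_inner_smul_right]
        set u := x (i + 1) + (a (i + 1) / A (i + 1)) • (y - m (z i)) with hu
        have huX : u ∈ X := by
          have hrep : u = (A i / A (i + 1)) • xh i + (a (i + 1) / A (i + 1)) • y := by
            rw [hu, hx i]; module
          rw [hrep]
          refine hXcvx (hxhX i) hy (le_of_lt (div_pos (hApos i) (hApos _)))
            (le_of_lt (div_pos (hapos _) (hApos _))) ?_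
          rw [← add_div, ← hAsucc]
          exact div_self hA'ne
        have hu' : u - x (i + 1) = (a (i + 1) / A (i + 1)) • (y - m (z i)) := by
          rw [hu]; abel
        have hnormu : ‖u - x (i + 1)‖ ^ 2
            = (a (i + 1) / A (i + 1)) ^ 2 * ‖y - m (z i)‖ ^ 2 := by
          rw [hu', norm_smul, Real.norm_eq_abs, mul_pow, sq_abs]
        have hinneru : ⟪gf (x (i + 1)), u - x (i + 1)⟫
            = (a (i + 1) / A (i + 1)) * ⟪gf (x (i + 1)), y - m (z i)⟫ := by
          rw [hu', real_inner_smul_right]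
        have h4 : ⟪gf (x (i + 1)), xh (i + 1) - x (i + 1)⟫
              + L / 2 * ‖xh (i + 1) - x (i + 1)‖ ^ 2
            ≤ (a (i + 1) / A (i + 1)) * ⟪gf (x (i + 1)), y - m (z i)⟫
              + L / 2 * ((a (i + 1) / A (i + 1)) ^ 2 * ‖y - m (z i)‖ ^ 2) := by
          have h := isMinOn_iff.mp (hgradmin (x (i + 1))) u huX
          rw [hxh i, ← hinneru, ← hnormu]
          simpa using h
        have h5 := hsmooth (x (i + 1)) (hxX _) (xh (i + 1)) (hxhX _)
        have hAi0 : (0:ℝ) ≤ A i := le_of_lt (hApos i)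
        have hA'0 : (0:ℝ) < A (i + 1) := hApos (i + 1)
        have sb := mul_le_mul_of_nonneg_left h3 hAi0
        have s5 := mul_le_mul_of_nonneg_left h5 (le_of_lt hA'0)
        have s4 := mul_le_mul_of_nonneg_left h4 (le_of_lt hA'0)
        have hF : A (i + 1) * ((a (i + 1) / A (i + 1)) * ⟪gf (x (i + 1)), y - m (z i)⟫)
            = a (i + 1) * ⟪gf (x (i + 1)), y - m (z i)⟫ := by
          field_simp
        have hG : A (i + 1) * (L / 2 * ((a (i + 1) / A (i + 1)) ^ 2 * ‖y - m (z i)‖ ^ 2))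
            ≤ σ / 2 * ‖y - m (z i)‖ ^ 2 := by
          have hq : A (i + 1) * (L / 2 * ((a (i + 1) / A (i + 1)) ^ 2 * ‖y - m (z i)‖ ^ 2))
              = L * a (i + 1) ^ 2 / (2 * A (i + 1)) * ‖y - m (z i)‖ ^ 2 := by
            field_simp
          rw [hq]
          have hd : L * a (i + 1) ^ 2 / (2 * A (i + 1)) ≤ σ / 2 := by
            rw [div_le_div_iff₀ (by positivity) (by norm_num)]
            nlinarith [hkey i]
          exact mul_le_mul_of_nonneg_right hd (by positivity)
        have hAf : A (i + 1) * f (x (i + 1))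
            = A i * f (x (i + 1)) + a (i + 1) * f (x (i + 1)) := by
          rw [hAsucc]; ring
        have expand4 : A (i + 1) * ((a (i + 1) / A (i + 1)) * ⟪gf (x (i + 1)), y - m (z i)⟫
              + L / 2 * ((a (i + 1) / A (i + 1)) ^ 2 * ‖y - m (z i)‖ ^ 2))
            = A (i + 1) * ((a (i + 1) / A (i + 1)) * ⟪gf (x (i + 1)), y - m (z i)⟫)
              + A (i + 1) * (L / 2 * ((a (i + 1) / A (i + 1)) ^ 2 * ‖y - m (z i)‖ ^ 2)) := by
          ring
        rw [hsplit]
        rw [expand4] at s4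
        nlinarith [h1, h2, sb, s5, s4, hC, hF, hG, hAf]
  -- conclusion
  have hfin : Lf k xstar ≤ A k * f xstar := by
    rw [hA k, Finset.sum_mul]
    refine Finset.sum_le_sum fun j _ => ?_
    have h1 := hconv (x j) (hxX j) xstar hxstarX
    have h2 := le_of_lt (hapos j)
    nlinarith
  have hmain := main k xstar hxstarX
  have hφx : ψ xstar - ψ (x 0) - ⟪gψ (x 0), xstar - x 0⟫ = φ xstar := (hφ xstar).symm
  rw [hφx]
  have hdiv : f (xh k) - f xstar ≤ φ xstar / A k := by
    rw [le_div_iff₀ (hApos k)]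
    nlinarith
  have heq : φ xstar / A k = 4 * L / σ * (φ xstar / ((k + 1) * (k + 2))) := by
    rw [hAc k]
    have h1 : ((k:ℝ) + 1) ≠ 0 := by positivity
    have h2 : ((k:ℝ) + 2) ≠ 0 := by positivity
    field_simp
  linarith [heq ▸ hdiv]
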